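/- Let (χ₁, χ₂) and (η₁, η₂) be two pairs of conjugate characters of ρ modulo π^n. If m(χ₁,χ₂) ≥ n/2 then m(η₁,η₂) ≥ n/2, and if m(χ₁,χ₂) < n/2 then m(η₁,η₂) = m(χ₁,χ₂). -/

import Mathlib

open Matrix

/-- `(χ₁, χ₂)` is a pair of conjugate characters of `ρ` modulo `π^n`:
the characteristic polynomial of `ρ(g)` factors as `(t-χ₁(g))(t-χ₂(g))` mod `π^n`. -/
def IsConjPair {O : Type*} [CommRing O] {G : Type*} [Group G] (π : O) (n : ℕ)
    (ρ : G →* GL (Fin 2) O) (χ₁ χ₂ : G →* (O ⧸ Ideal.span {π ^ n})ˣ) : Prop :=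
  ∀ g : G,
    Ideal.Quotient.mk (Ideal.span {π ^ n})
      (Matrix.trace (ρ g : Matrix (Fin 2) (Fin 2) O)) = (χ₁ g : O ⧸ Ideal.span {π ^ n}) + χ₂ g
    ∧ Ideal.Quotient.mk (Ideal.span {π ^ n})
      (Matrix.det (ρ g : Matrix (Fin 2) (Fin 2) O)) = (χ₁ g : O ⧸ Ideal.span {π ^ n}) * χ₂ g

/-- `m` is the largest integer (at most `n`) such that `χ₁ ≡ χ₂ (mod π^m)`. -/
def IsCongIndex {O : Type*} [CommRing O] {G : Type*} [Group G] (π : O) (n : ℕ)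
    (χ₁ χ₂ : G →* (O ⧸ Ideal.span {π ^ n})ˣ) (m : ℕ) : Prop :=
  m ≤ n
  ∧ (∀ g : G, (Ideal.Quotient.mk (Ideal.span {π ^ n}) π) ^ m ∣
      ((χ₁ g : O ⧸ Ideal.span {π ^ n}) - χ₂ g))
  ∧ ∀ k ≤ n, (∀ g : G, (Ideal.Quotient.mk (Ideal.span {π ^ n}) π) ^ k ∣
      ((χ₁ g : O ⧸ Ideal.span {π ^ n}) - χ₂ g)) → k ≤ m

/-- Divisibility by `π^k` in `O ⧸ π^n` detects divisibility in `O`, for `k ≤ n`. -/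
lemma dvd_mk_iff {O : Type*} [CommRing O] (π : O) {n k : ℕ} (hk : k ≤ n) (x : O) :
    (Ideal.Quotient.mk (Ideal.span {π ^ n}) π) ^ k ∣ Ideal.Quotient.mk (Ideal.span {π ^ n}) x
      ↔ π ^ k ∣ x := by
  constructor
  · rintro ⟨y, hy⟩
    obtain ⟨z, rfl⟩ := Ideal.Quotient.mk_surjective y
    have h0 : Ideal.Quotient.mk (Ideal.span {π ^ n}) (x - π ^ k * z) = 0 := by
      rw [map_sub, _root_.map_mul, map_pow, hy, sub_self]
    rw [Ideal.Quotient.eq_zero_iff_mem, Ideal.mem_span_singleton] at h0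
    have h1 : π ^ k ∣ x - π ^ k * z := (pow_dvd_pow π hk).trans h0
    obtain ⟨w, hw⟩ := h1
    exact ⟨z + w, by linear_combination hw⟩
  · rintro ⟨y, rfl⟩
    exact ⟨Ideal.Quotient.mk _ y, by rw [_root_.map_mul, map_pow]⟩

/-- In a DVR, `π^j ∣ x^2` implies `π^⌈j/2⌉ ∣ x`. -/
lemma dvd_of_sq {O : Type*} [CommRing O] [IsDomain O] [IsDiscreteValuationRing O]
    {π : O} (hπ : Irreducible π) {j : ℕ} {x : O} (h : π ^ j ∣ x ^ 2) :
    π ^ ((j + 1) / 2) ∣ x := by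
  rcases eq_or_ne x 0 with rfl | hx
  · exact dvd_zero _
  obtain ⟨m, u, rfl⟩ := IsDiscreteValuationRing.eq_unit_mul_pow_irreducible hx hπ
  have h2 : π ^ j ∣ π ^ (2 * m) := by
    have h' : π ^ j ∣ (u : O) ^ 2 * π ^ (2 * m) := by
      obtain ⟨c, hc⟩ := h
      exact ⟨c, by rw [← hc]; ring⟩
    have h'' : π ^ j ∣ ((u ^ 2 : Oˣ) : O) * π ^ (2 * m) := by
      rw [Units.val_pow_eq_pow_val]; exact h'
    exact Units.dvd_mul_left.mp h''
  have hjm : j ≤ 2 * m := (pow_dvd_pow_iff hπ.ne_zero hπ.not_isUnit).mp h2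
  exact ((pow_dvd_pow π (by omega : (j + 1) / 2 ≤ m)).mul_left _)

/-- Dichotomy for the congruence indices of two pairs of conjugate characters mod `π^n`:
if `m(χ₁,χ₂) ≥ n/2` then `m(η₁,η₂) ≥ n/2`, and if `m(χ₁,χ₂) < n/2` then
`m(η₁,η₂) = m(χ₁,χ₂)`. -/
theorem cong_index_dichotomy
    {O : Type*} [CommRing O] [IsDomain O] [IsDiscreteValuationRing O]
    (π : O) (hπ : Irreducible π) (h2 : IsUnit (2 : O))
    {G : Type*} [Group G] (n : ℕ)
    (ρ : G →* GL (Fin 2) O)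
    (χ₁ χ₂ η₁ η₂ : G →* (O ⧸ Ideal.span {π ^ n})ˣ)
    (hχ : IsConjPair π n ρ χ₁ χ₂) (hη : IsConjPair π n ρ η₁ η₂)
    (mχ mη : ℕ)
    (hmχ : IsCongIndex π n χ₁ χ₂ mχ) (hmη : IsCongIndex π n η₁ η₂ mη) :
    (n ≤ 2 * mχ → n ≤ 2 * mη) ∧ (2 * mχ < n → mη = mχ) := by
  choose a ha using fun g => Ideal.Quotient.mk_surjective
    ((χ₁ g : O ⧸ Ideal.span {π ^ n}) - (χ₂ g : O ⧸ Ideal.span {π ^ n}))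
  choose b hb using fun g => Ideal.Quotient.mk_surjective
    ((η₁ g : O ⧸ Ideal.span {π ^ n}) - (η₂ g : O ⧸ Ideal.span {π ^ n}))
  have key : ∀ g, π ^ n ∣ a g ^ 2 - b g ^ 2 := by
    intro g
    rw [← Ideal.mem_span_singleton, ← Ideal.Quotient.eq_zero_iff_mem]
    have e : Ideal.Quotient.mk (Ideal.span {π ^ n}) (a g ^ 2 - b g ^ 2)
        = ((χ₁ g : O ⧸ Ideal.span {π ^ n}) - χ₂ g) ^ 2
          - ((η₁ g : O ⧸ Ideal.span {π ^ n}) - η₂ g) ^ 2 := by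
      rw [map_sub, map_pow, map_pow, ha, hb]
    rw [e]
    linear_combination
      ((χ₁ g : O ⧸ Ideal.span {π ^ n}) + χ₂ g + η₁ g + η₂ g) * ((hη g).1 - (hχ g).1)
        + 4 * ((hχ g).2 - (hη g).2)
  have hdvd_a : ∀ g, π ^ mχ ∣ a g := fun g =>
    (dvd_mk_iff π hmχ.1 (a g)).mp (by rw [ha]; exact hmχ.2.1 g)
  have hdvd_b : ∀ g, π ^ mη ∣ b g := fun g =>
    (dvd_mk_iff π hmη.1 (b g)).mp (by rw [hb]; exact hmη.2.1 g)
  have max_a : ∀ k, k ≤ n → (∀ g, π ^ k ∣ a g) → k ≤ mχ := fun k hk h =>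
    hmχ.2.2 k hk (fun g => by rw [← ha g]; exact (dvd_mk_iff π hk (a g)).mpr (h g))
  have max_b : ∀ k, k ≤ n → (∀ g, π ^ k ∣ b g) → k ≤ mη := fun k hk h =>
    hmη.2.2 k hk (fun g => by rw [← hb g]; exact (dvd_mk_iff π hk (b g)).mpr (h g))
  have sq_a : ∀ g, π ^ (2 * mχ) ∣ a g ^ 2 := by
    intro g
    have := pow_dvd_pow_of_dvd (hdvd_a g) 2
    rwa [← pow_mul, mul_comm mχ 2] at this
  constructor
  · intro hn
    rcases Nat.eq_zero_or_pos n with rfl | hn0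
    · omega
    have hk : (n + 1) / 2 ≤ n := by omega
    have hb' : ∀ g, π ^ ((n + 1) / 2) ∣ b g := by
      intro g
      apply dvd_of_sq hπ
      have h1 : π ^ n ∣ a g ^ 2 := (pow_dvd_pow π hn).trans (sq_a g)
      simpa using dvd_sub h1 (key g)
    have := max_b _ hk hb'
    omega
  · intro hlt
    have hle1 : mχ ≤ mη := by
      apply max_b mχ (by omega)
      intro g
      have hsq : π ^ (2 * mχ) ∣ b g ^ 2 := by
        simpa using dvd_sub (sq_a g) ((pow_dvd_pow π hlt.le).trans (key g))
      have := dvd_of_sq hπ hsq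
      have e : (2 * mχ + 1) / 2 = mχ := by omega
      rwa [e] at this
    have hle2 : mη ≤ mχ := by
      by_contra hgt
      push_neg at hgt
      have hb1 : ∀ g, π ^ (mχ + 1) ∣ b g := fun g =>
        (pow_dvd_pow π (by omega)).trans (hdvd_b g)
      have ha1 : ∀ g, π ^ (mχ + 1) ∣ a g := by
        intro g
        have hb2 : π ^ (2 * mχ + 1) ∣ b g ^ 2 := by
          have := pow_dvd_pow_of_dvd (hb1 g) 2
          rw [← pow_mul] at this
          exact (pow_dvd_pow π (by omega)).trans this
        have h1 : π ^ (2 * mχ + 1) ∣ a g ^ 2 := by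
          simpa using dvd_add hb2 ((pow_dvd_pow π (by omega : 2 * mχ + 1 ≤ n)).trans (key g))
        have := dvd_of_sq hπ h1
        have e : (2 * mχ + 1 + 1) / 2 = mχ + 1 := by omega
        rwa [e] at this
      have := max_a (mχ + 1) (by omega) ha1
      omega
    omega
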